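/- Let H be a real Hilbert space, let M ⊆ H be a nonempty subset that is closed as a subset of H, and let L ⊆ H be a linear subspace. Suppose that for every h₀ ∈ M there exists an open neighborhood U ⊆ H of h₀ such that U ∩ M = U ∩ ((U ∩ M) + L). Then M + L ⊆ M. -/
import Mathlib


open Set Pointwise

noncomputable section

/-- `φ : V → U ∩ M` is a parametrization of class `C^k` of `M` around `h₀`:
`U` is an open neighborhood of `h₀`, `V` is open, `φ ∈ C^k(V;H)`,
`φ : V → U ∩ M` is a homeomorphism, and `Dφ(y)` is injective for all `y ∈ V`. -/
structure IsParametrization {E H : Type*} [NormedAddCommGroup E] [NormedSpace ℝ E]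
    [NormedAddCommGroup H] [NormedSpace ℝ H] (k : ℕ) (M : Set H) (h₀ : H)
    (V : Set E) (φ : E → H) (U : Set H) : Prop where
  isOpen_U : IsOpen U
  h₀_mem_U : h₀ ∈ U
  isOpen_V : IsOpen V
  contDiffOn : ContDiffOn ℝ k φ V
  image_eq : φ '' V = U ∩ M
  injOn : Set.InjOn φ V
  exists_contInv : ∃ ψ : H → E, ContinuousOn ψ (U ∩ M) ∧ ∀ y ∈ V, ψ (φ y) = y
  fderiv_injective : ∀ y ∈ V, Function.Injective (fderiv ℝ φ y)

/-- `M` is an `m`-dimensional `C^k`-submanifold of `H`: `M` is nonempty and every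
point of `M` admits a parametrization with domain an open subset of `ℝ^m`. -/
def IsSubmanifold {H : Type*} [NormedAddCommGroup H] [NormedSpace ℝ H]
    (k m : ℕ) (M : Set H) : Prop :=
  M.Nonempty ∧ ∀ h₀ ∈ M, ∃ (V : Set (EuclideanSpace ℝ (Fin m)))
    (φ : EuclideanSpace ℝ (Fin m) → H) (U : Set H), IsParametrization k M h₀ V φ U

/-- The tangent space `T_h M`: the image of `Dφ(φ⁻¹(h))` for a parametrization `φ`
of `M` around `h`. -/
def TangentSet {H : Type*} [NormedAddCommGroup H] [NormedSpace ℝ H]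
    (k m : ℕ) (M : Set H) (h : H) : Set H :=
  {v | ∃ (V : Set (EuclideanSpace ℝ (Fin m))) (φ : EuclideanSpace ℝ (Fin m) → H)
    (U : Set H), IsParametrization k M h V φ U ∧
      ∃ y ∈ V, φ y = h ∧ v ∈ Set.range (fderiv ℝ φ y)}

/-- `M` has flatness at least `d` at `h₀`: some `d`-dimensional subspace `L ⊆ H` is
contained in all tangent spaces `T_h M` for `h ∈ U ∩ M`, `U` an open neighborhood of `h₀`. -/
def FlatAt {H : Type*} [NormedAddCommGroup H] [NormedSpace ℝ H]
    (k m : ℕ) (M : Set H) (h₀ : H) (d : ℕ) : Prop :=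
  ∃ (L : Submodule ℝ H) (U : Set H), Module.finrank ℝ L = d ∧ IsOpen U ∧ h₀ ∈ U ∧
    ∀ h ∈ U ∩ M, (L : Set H) ⊆ TangentSet k m M h

/-- The flatness `fl M(h₀)` of `M` at `h₀`: the largest `d ∈ {0,…,m}` such that `M` has
flatness at least `d` at `h₀`. -/
def flatnessAt {H : Type*} [NormedAddCommGroup H] [NormedSpace ℝ H]
    (k m : ℕ) (M : Set H) (h₀ : H) : ℕ :=
  sSup {d | d ≤ m ∧ FlatAt k m M h₀ d}

/-- The flatness `fl M` of `M`: the minimum of `fl M(h)` over `h ∈ M`. -/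
def flatness {H : Type*} [NormedAddCommGroup H] [NormedSpace ℝ H]
    (k m : ℕ) (M : Set H) : ℕ :=
  sInf (flatnessAt k m M '' M)

/-- if `M` is nonempty, closed, and locally satisfies
`U ∩ M = U ∩ ((U ∩ M) + L)`, then `M + L ⊆ M`. -/
theorem stmt6 {H : Type*} [NormedAddCommGroup H] [InnerProductSpace ℝ H] [CompleteSpace H]
    (M : Set H) (hne : M.Nonempty) (hMclosed : IsClosed M) (L : Submodule ℝ H)
    (hloc : ∀ h₀ ∈ M, ∃ U : Set H, IsOpen U ∧ h₀ ∈ U ∧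
      U ∩ M = U ∩ ((U ∩ M) + (L : Set H))) :
    M + (L : Set H) ⊆ M := by
  rintro x ⟨m, hm, l, hl, rfl⟩
  set f : ℝ → H := fun t => m + t • l with hf
  have hfc : Continuous f := by fun_prop
  set S : Set ℝ := {t | f t ∈ M} with hS
  have hSclosed : IsClosed S := hMclosed.preimage hfc
  have hSopen : IsOpen S := by
    rw [isOpen_iff_mem_nhds]
    intro t ht
    obtain ⟨U, hUopen, hmem, hUeq⟩ := hloc (f t) ht
    have hnb : f ⁻¹' U ∈ nhds t := hfc.continuousAt.preimage_mem_nhds (hUopen.mem_nhds hmem)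
    filter_upwards [hnb] with s hs
    have hmemadd : f s ∈ U ∩ ((U ∩ M) + (L : Set H)) := by
      refine ⟨hs, ?_⟩
      have heq : f s = (f t) + ((s - t) • l) := by simp only [hf]; module
      rw [heq]
      exact Set.add_mem_add ⟨hmem, ht⟩ (L.smul_mem _ hl)
    rw [← hUeq] at hmemadd
    exact hmemadd.2
  have h0 : (0:ℝ) ∈ S := by simpa [hS, hf] using hm
  have huniv : S = Set.univ := IsClopen.eq_univ ⟨hSclosed, hSopen⟩ ⟨0, h0⟩
  have h1 : (1:ℝ) ∈ S := huniv ▸ Set.mem_univ 1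
  simpa [hS, hf] using h1
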